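/- Every finite closure algebra (A, C) is isomorphic to the closure algebra (P(S), R⁻¹) of a finite quasi-ordered set, where S is the set of atoms of A and x R y iff x ≤ C y. -/

import Mathlib

section Aux
variable {A : Type*} [BooleanAlgebra A]

private lemma myatom_le_sup {x a b : A} (hx : IsAtom x) : x ≤ a ⊔ b ↔ x ≤ a ∨ x ≤ b := by
  constructor
  · intro h
    by_contra hc
    push_neg at hc
    have h1 : x ⊓ a = ⊥ :=
      hx.2 _ (lt_of_le_of_ne inf_le_left (fun he => hc.1 (inf_eq_left.mp he)))
    have h2 : x ⊓ b = ⊥ :=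
      hx.2 _ (lt_of_le_of_ne inf_le_left (fun he => hc.2 (inf_eq_left.mp he)))
    have hx' : x ⊓ (a ⊔ b) = x := inf_eq_left.mpr h
    rw [inf_sup_left, h1, h2, bot_sup_eq] at hx'
    exact hx.1 hx'.symm
  · rintro (h | h)
    · exact h.trans le_sup_left
    · exact h.trans le_sup_right

private lemma myatom_le_compl {x a : A} (hx : IsAtom x) : x ≤ aᶜ ↔ ¬ x ≤ a := by
  constructor
  · intro h hle
    exact hx.1 (le_bot_iff.mp (le_inf hle h |>.trans_eq inf_compl_eq_bot))
  · intro h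
    have h1 : x ⊓ a = ⊥ :=
      hx.2 _ (lt_of_le_of_ne inf_le_left (fun he => h (inf_eq_left.mp he)))
    exact le_compl_iff_disjoint_right.mpr (disjoint_iff.mpr h1)

private lemma myatom_le_finsetSup {x : A} (hx : IsAtom x) {ι : Type*} (s : Finset ι)
    (g : ι → A) : x ≤ s.sup g ↔ ∃ i ∈ s, x ≤ g i := by
  classical
  induction s using Finset.induction with
  | empty => simp [le_bot_iff, hx.1]
  | insert _ _ h ih =>
    rw [Finset.sup_insert, myatom_le_sup hx, ih]
    simp [or_and_right, exists_or]

private lemma C_finsetSup (C : A → A) (hadd : ∀ a b, C (a ⊔ b) = C a ⊔ C b)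
    (hbot : C ⊥ = ⊥) {ι : Type*} (s : Finset ι) (g : ι → A) :
    C (s.sup g) = s.sup (fun i => C (g i)) := by
  classical
  induction s using Finset.induction with
  | empty => simpa using hbot
  | insert _ _ h ih => rw [Finset.sup_insert, hadd, ih, Finset.sup_insert]

private lemma sup_atoms_eq [Fintype A] (a : A) (s : Finset {x : A // IsAtom x})
    (hs : ∀ x, x ∈ s ↔ (x : A) ≤ a) : s.sup (fun x => (x : A)) = a := by
  apply le_antisymm
  · exact Finset.sup_le fun x hx => (hs x).mp hx
  · set c := s.sup (fun x : {x : A // IsAtom x} => (x : A)) with hc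
    have hb : a ⊓ cᶜ = ⊥ := by
      rcases eq_bot_or_exists_atom_le (a ⊓ cᶜ) with h | ⟨x, hxatom, hxle⟩
      · exact h
      · have hxa : x ≤ a := hxle.trans inf_le_left
        have hxc : x ≤ c :=
          Finset.le_sup (f := fun x : {x : A // IsAtom x} => (x : A))
            ((hs ⟨x, hxatom⟩).mpr hxa)
        exact absurd hxc ((myatom_le_compl hxatom).mp (hxle.trans inf_le_right))
    exact sdiff_eq_bot_iff.mp (by rwa [sdiff_eq])

end Aux

theorem stmt_17 {A : Type*} [BooleanAlgebra A] [Fintype A]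
    (C : A → A)
    (hadd : ∀ a b, C (a ⊔ b) = C a ⊔ C b)
    (hbot : C ⊥ = ⊥)
    (hinfl : ∀ a, a ≤ C a)
    (hidem : ∀ a, C (C a) = C a)
    (R : {x : A // IsAtom x} → {x : A // IsAtom x} → Prop)
    (hR : ∀ x y, R x y ↔ (x : A) ≤ C (y : A))
    (f : A → Set {x : A // IsAtom x})
    (hf : ∀ a, f a = {x : {x : A // IsAtom x} | (x : A) ≤ a}) :
    Reflexive R ∧ Transitive R ∧
    Function.Bijective f ∧
    (∀ a b, f (a ⊓ b) = f a ∩ f b) ∧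
    (∀ a b, f (a ⊔ b) = f a ∪ f b) ∧
    (∀ a, f aᶜ = (f a)ᶜ) ∧
    (∀ a, f (C a) = {x | ∃ y ∈ f a, R x y}) := by
  classical
  have hmono : ∀ a b : A, a ≤ b → C a ≤ C b := by
    intro a b hab
    have : C b = C a ⊔ C b := by rw [← hadd, sup_eq_right.mpr hab]
    rw [this]; exact le_sup_left
  refine ⟨?_, ?_, ⟨?_, ?_⟩, ?_, ?_, ?_, ?_⟩
  · intro x; exact (hR x x).mpr (hinfl _)
  · intro x y z hxy hyz
    rw [hR] at *
    exact hxy.trans ((hmono _ _ hyz).trans_eq (hidem _))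
  · -- injective
    intro a b hab
    rw [hf, hf] at hab
    have key : ∀ u v : A, ({x : {x : A // IsAtom x} | (x : A) ≤ u} : Set _) =
        {x : {x : A // IsAtom x} | (x : A) ≤ v} → u ≤ v := by
      intro u v huv
      have hb : u ⊓ vᶜ = ⊥ := by
        rcases eq_bot_or_exists_atom_le (u ⊓ vᶜ) with h | ⟨x, hxatom, hxle⟩
        · exact h
        · have hxu : x ≤ u := hxle.trans inf_le_left
          have hxv : x ≤ v := by
            have := Set.ext_iff.mp huv ⟨x, hxatom⟩
            exact this.mp hxu
          exact absurd hxv ((myatom_le_compl hxatom).mp (hxle.trans inf_le_right))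
      exact sdiff_eq_bot_iff.mp (by rwa [sdiff_eq])
    exact le_antisymm (key a b hab) (key b a hab.symm)
  · -- surjective
    intro s
    refine ⟨s.toFinset.sup (fun x => (x : A)), ?_⟩
    rw [hf]
    ext x
    simp only [Set.mem_setOf_eq]
    rw [myatom_le_finsetSup x.2]
    constructor
    · rintro ⟨y, hy, hxy⟩
      have : (x : A) = (y : A) := by
        rcases (y.2.le_iff.mp hxy) with h | h
        · exact absurd h x.2.1
        · exact h
      have : x = y := Subtype.ext this
      rw [this]; exact Set.mem_toFinset.mp hy
    · intro hx
      exact ⟨x, Set.mem_toFinset.mpr hx, le_rfl⟩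
  · intro a b; rw [hf, hf, hf]; ext x; simp [le_inf_iff]
  · intro a b; rw [hf, hf, hf]; ext x; simp [myatom_le_sup x.2]
  · intro a; rw [hf, hf]; ext x; simp [myatom_le_compl x.2]
  · intro a
    rw [hf, hf]
    ext x
    simp only [Set.mem_setOf_eq, hR]
    have ha : C a = (Finset.univ.filter fun y : {x : A // IsAtom x} => (y : A) ≤ a).sup
        (fun y => C (y : A)) := by
      conv_lhs => rw [← sup_atoms_eq a (Finset.univ.filter fun y : {x : A // IsAtom x} =>
        (y : A) ≤ a) (fun x => by simp)]
      exact C_finsetSup C hadd hbot _ _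
    constructor
    · intro hx
      rw [ha, myatom_le_finsetSup x.2] at hx
      obtain ⟨y, hy, hxy⟩ := hx
      exact ⟨y, (Finset.mem_filter.mp hy).2, hxy⟩
    · rintro ⟨y, hy, hxy⟩
      exact hxy.trans (hmono _ _ hy)
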